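/- Let ℓ ≥ 0 be an integer and let M be an integer with M ≥ 2^ℓ. Then (2^ℓ/M) · (1 + ∑_{ζ ∈ ℤ, ζ ≠ 0} (sin(πζ·2^ℓ/M)/(πζ·2^ℓ/M))²) ≤ 6. -/

import Mathlib

open Real

lemma sinc_hasSum_nat {x : ℝ} (hx0 : 0 < x) (hx1 : x ≤ 1) :
    HasSum (fun n : ℕ => (Real.sin (π * n * x) / (π * n * x)) ^ 2) ((1 - x) / (2 * x)) := by
  have hB : (Polynomial.map (algebraMap ℚ ℝ) (Polynomial.bernoulli 2)).eval x
      = x ^ 2 - x + 1 / 6 := by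
    simp [Polynomial.bernoulli_def, Finset.sum_range_succ, bernoulli, bernoulli'_two]
    norm_num; ring
  have h1 := hasSum_one_div_nat_pow_mul_cos (k := 1) one_ne_zero
      (Set.mem_Icc.mpr ⟨hx0.le, hx1⟩)
  have h2 := hasSum_zeta_two
  have h3 := (h2.sub h1).div_const (2 * π ^ 2 * x ^ 2)
  have hπ := Real.pi_pos
  have hfun : (fun n : ℕ => (1 / (n:ℝ) ^ 2 - 1 / (n:ℝ) ^ (2*1) * cos (2 * π * n * x))
      / (2 * π ^ 2 * x ^ 2))
      = fun n : ℕ => (Real.sin (π * n * x) / (π * n * x)) ^ 2 := by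
    funext n
    rcases Nat.eq_zero_or_pos n with rfl | hn
    · simp
    · have hn' : (n : ℝ) ≠ 0 := Nat.cast_ne_zero.mpr hn.ne'
      have hs : Real.sin (π * n * x) ^ 2 = 1 / 2 - Real.cos (2 * π * n * x) / 2 := by
        have := Real.cos_sq (π * n * x)
        have h4 : Real.sin (π * n * x) ^ 2 = 1 - Real.cos (π * n * x) ^ 2 :=
          Real.sin_sq _
        rw [h4, this]; ring_nf
      rw [div_pow, hs]
      rw [div_eq_div_iff (by positivity) (by positivity)]
      field_simp
      ring
  have hval : (π ^ 2 / 6 - (-1:ℝ) ^ (1 + 1) * (2 * π) ^ (2 * 1) / 2 / ((2 * 1).factorial : ℝ) *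
      (Polynomial.map (algebraMap ℚ ℝ) (Polynomial.bernoulli (2 * 1))).eval x)
      / (2 * π ^ 2 * x ^ 2) = (1 - x) / (2 * x) := by
    norm_num [hB]
    rw [div_eq_div_iff (by positivity) (by positivity)]
    ring
  rw [hfun, hval] at h3
  exact h3


/-- For integers `ℓ ≥ 0` and `M ≥ 2^ℓ`,
`(2^ℓ/M)(1 + ∑_{ζ ≠ 0} (sin(πζ2^ℓ/M)/(πζ2^ℓ/M))²) ≤ 6`. -/
theorem sinc_sum_bound (ℓ M : ℕ) (hM : 2 ^ ℓ ≤ M) :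
    (2:ℝ)^ℓ / M *
      (1 + ∑' ζ : {ζ : ℤ // ζ ≠ 0},
        (Real.sin (Real.pi * ((ζ : ℤ) : ℝ) * ((2:ℝ)^ℓ / M)) /
          (Real.pi * ((ζ : ℤ) : ℝ) * ((2:ℝ)^ℓ / M))) ^ 2) ≤ 6 := by
  set x : ℝ := (2:ℝ)^ℓ / M with hxdef
  have hM0 : 0 < (M:ℝ) := by
    have : (0:ℕ) < M := lt_of_lt_of_le (pow_pos (by norm_num) ℓ) hM
    exact_mod_cast this
  have hx0 : 0 < x := by positivity
  have hx1 : x ≤ 1 := by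
    rw [hxdef, div_le_one hM0]
    calc (2:ℝ)^ℓ = ((2^ℓ : ℕ) : ℝ) := by push_cast; ring
    _ ≤ M := by exact_mod_cast hM
  set F : ℤ → ℝ := fun ζ => (Real.sin (π * (ζ:ℝ) * x) / (π * (ζ:ℝ) * x)) ^ 2 with hF
  have hnat : HasSum (fun n : ℕ => F n) ((1 - x) / (2 * x)) := by
    convert sinc_hasSum_nat hx0 hx1 using 2
    simp [hF]
  have hF0 : F 0 = 0 := by simp [hF]
  have hneg : HasSum (fun n : ℕ => F (-(n + 1))) ((1 - x) / (2 * x)) := by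
    have h5 := (hasSum_nat_add_iff (f := fun n : ℕ => F n) (g := (1 - x) / (2 * x)) 1).mpr
      (by simpa [hF0] using hnat)
    have heq : (fun n : ℕ => F (-(n + 1))) = (fun n : ℕ => F ((n + 1 : ℕ))) := by
      funext n
      simp only [hF]
      push_cast
      rw [show π * (-((n:ℝ) + 1)) * x = -(π * ((n:ℝ) + 1) * x) by ring, Real.sin_neg,
        neg_div_neg_eq]
    rw [heq]
    exact h5
  have hint : HasSum F ((1 - x) / x) := by
    have := hnat.of_nat_of_neg_add_one hneg
    have he : (1 - x) / (2 * x) + (1 - x) / (2 * x) = (1 - x) / x := by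
      field_simp; ring
    rw [← he]; exact this
  have hsub : HasSum (fun ζ : {ζ : ℤ // ζ ≠ 0} => F ζ) ((1 - x) / x) := by
    refine (hasSum_subtype_iff_of_support_subset ?_).mpr hint
    intro ζ hζ
    simp only [Function.mem_support] at hζ
    intro h0
    exact hζ (by rw [h0]; exact hF0)
  rw [hsub.tsum_eq]
  have : x * (1 + (1 - x) / x) = 1 := by field_simp; ring
  rw [this]
  norm_num
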